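/- Let d ≥ 2, b > a ≥ 1, 0 < l ≤ b, and suppose a + l > b. If the function f(x) = ((a x + l)/b)^d has a fixed point in [1,∞), then h(T_{M(a,b;l)}) = log b. -/

import Mathlib

open Filter Real

/-- `treeP d M n i` = number of `n`-blocks of the hom Markov tree-shift `T_M`
on the `d`-tree whose root label is `i`. -/
def treeP (d : ℕ) {ι : Type} [Fintype ι] (M : Matrix ι ι ℕ) : ℕ → ι → ℕ
  | 0, _ => 1
  | n + 1, i => (∑ j, M i j * treeP d M n j) ^ d

/-- `|Δ_n| = 1 + d + ⋯ + d^n`. -/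
def deltaCard (d n : ℕ) : ℕ := ∑ i ∈ Finset.range (n + 1), d ^ i

/-- Topological entropy of the hom Markov tree-shift `T_M` on the `d`-tree. -/
noncomputable def treeEntropy (d : ℕ) {ι : Type} [Fintype ι] (M : Matrix ι ι ℕ) : ℝ :=
  Filter.limsup (fun n => Real.log (∑ i, treeP d M n i) / (deltaCard d n : ℝ)) Filter.atTop

/-- `M` has entries in `{0,1}`. -/
def IsBinary {ι : Type} [Fintype ι] (M : Matrix ι ι ℕ) : Prop := ∀ i j, M i j ≤ 1

/-- `M` is irreducible. -/
def MatIrreducible {ι : Type} [Fintype ι] [DecidableEq ι] (M : Matrix ι ι ℕ) : Prop :=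
  ∀ i j, ∃ n, 1 ≤ n ∧ 0 < (M ^ n) i j

/-- `M` is the block matrix `[[E_a, R],[O, E_b]]` with `R` binary of constant row sum `l`. -/
def IsMabl (a b l : ℕ) (M : Matrix (Fin (a + b)) (Fin (a + b)) ℕ) : Prop :=
  (∀ i j, M i j ≤ 1) ∧
  (∀ i j : Fin (a + b), (i : ℕ) < a → (j : ℕ) < a → M i j = 1) ∧
  (∀ i j : Fin (a + b), a ≤ (i : ℕ) → a ≤ (j : ℕ) → M i j = 1) ∧
  (∀ i j : Fin (a + b), a ≤ (i : ℕ) → (j : ℕ) < a → M i j = 0) ∧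
  (∀ i : Fin (a + b), (i : ℕ) < a → (∑ j : Fin (a + b), if a ≤ (j : ℕ) then M i j else 0) = l)


/- auxiliary -/
def qseq (b d : ℕ) : ℕ → ℕ
  | 0 => 1
  | n+1 => (b * qseq b d n) ^ d

def rseq (a b l d : ℕ) : ℕ → ℕ
  | 0 => 1
  | n+1 => (a * rseq a b l d n + l * qseq b d n) ^ d

lemma deltaCard_zero (d : ℕ) : deltaCard d 0 = 1 := by simp [deltaCard]

lemma deltaCard_succ (d n : ℕ) : deltaCard d (n+1) = 1 + d * deltaCard d n := by
  unfold deltaCard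
  rw [Finset.sum_range_succ']
  simp [pow_succ, Finset.mul_sum, mul_comm, add_comm]

lemma deltaCard_ge (d n : ℕ) (hd : 1 ≤ d) : n + 1 ≤ deltaCard d n := by
  unfold deltaCard
  calc n + 1 = ∑ _i ∈ Finset.range (n+1), 1 := by simp
  _ ≤ ∑ i ∈ Finset.range (n+1), d ^ i := Finset.sum_le_sum fun i _ => Nat.one_le_pow _ _ hd

lemma qseq_mul (b d : ℕ) (n : ℕ) : b * qseq b d n = b ^ deltaCard d n := by
  induction n with
  | zero => simp [qseq, deltaCard_zero]
  | succ n ih =>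
      rw [qseq, deltaCard_succ, ih, ← pow_mul, pow_add, pow_one, mul_comm d]

lemma sum_fin_ite_lt (a b c : ℕ) :
    ∑ j : Fin (a+b), (if (j:ℕ) < a then c else 0) = a * c := by
  rw [Fin.sum_univ_eq_sum_range (fun m => if m < a then c else 0)]
  rw [Finset.range_eq_Ico, ← Finset.sum_Ico_consecutive _ (Nat.zero_le a) (Nat.le_add_right a b)]
  rw [Finset.sum_congr rfl fun i hi => if_pos (Finset.mem_Ico.mp hi).2,
      Finset.sum_congr rfl fun i hi => if_neg (Nat.not_lt.mpr (Finset.mem_Ico.mp hi).1)]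
  simp [mul_comm]

lemma sum_fin_ite_le (a b c : ℕ) :
    ∑ j : Fin (a+b), (if a ≤ (j:ℕ) then c else 0) = b * c := by
  rw [Fin.sum_univ_eq_sum_range (fun m => if a ≤ m then c else 0)]
  rw [Finset.range_eq_Ico, ← Finset.sum_Ico_consecutive _ (Nat.zero_le a) (Nat.le_add_right a b)]
  rw [Finset.sum_congr rfl fun i hi => if_neg (Nat.not_le.mpr (Finset.mem_Ico.mp hi).2),
      Finset.sum_congr rfl fun i hi => if_pos (Finset.mem_Ico.mp hi).1]
  simp [mul_comm]

lemma treeP_structure {a b l d : ℕ} {M : Matrix (Fin (a + b)) (Fin (a + b)) ℕ}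
    (hM : IsMabl a b l M) :
    ∀ n (i : Fin (a+b)),
      treeP d M n i = if (i:ℕ) < a then rseq a b l d n else qseq b d n := by
  intro n
  induction n with
  | zero => intro i; simp [treeP, rseq, qseq]
  | succ n ih =>
      intro i
      show (∑ j, M i j * treeP d M n j) ^ d = _
      by_cases hi : (i:ℕ) < a
      · have key : ∀ j : Fin (a+b), M i j * treeP d M n j =
            (if (j:ℕ) < a then rseq a b l d n else 0)
              + (if a ≤ (j:ℕ) then M i j else 0) * qseq b d n := by
          intro j
          rcases lt_or_ge (j:ℕ) a with hj | hj
          · rw [ih j, if_pos hj, if_pos hj, if_neg (Nat.not_le.mpr hj), hM.2.1 i j hi hj]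
            ring
          · rw [ih j, if_neg (Nat.not_lt.mpr hj), if_neg (Nat.not_lt.mpr hj), if_pos hj,
              zero_add]
        rw [Finset.sum_congr rfl fun j _ => key j, Finset.sum_add_distrib,
          sum_fin_ite_lt, ← Finset.sum_mul, hM.2.2.2.2 i hi, if_pos hi, rseq]
      · have hi' : a ≤ (i:ℕ) := Nat.not_lt.mp hi
        have key : ∀ j : Fin (a+b), M i j * treeP d M n j =
            (if a ≤ (j:ℕ) then qseq b d n else 0) := by
          intro j
          rcases lt_or_ge (j:ℕ) a with hj | hj
          · rw [hM.2.2.2.1 i j hi' hj, if_neg (Nat.not_le.mpr hj), zero_mul]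
          · rw [ih j, if_neg (Nat.not_lt.mpr hj), hM.2.2.1 i j hi' hj, one_mul, if_pos hj]
        rw [Finset.sum_congr rfl fun j _ => key j, sum_fin_ite_le, if_neg hi, qseq]

lemma sum_treeP {a b l d : ℕ} {M : Matrix (Fin (a + b)) (Fin (a + b)) ℕ}
    (hM : IsMabl a b l M) (n : ℕ) :
    ∑ i, treeP d M n i = a * rseq a b l d n + b * qseq b d n := by
  have key : ∀ i : Fin (a+b), treeP d M n i =
      (if (i:ℕ) < a then rseq a b l d n else 0)
        + (if a ≤ (i:ℕ) then qseq b d n else 0) := by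
    intro i
    rw [treeP_structure hM n i]
    rcases lt_or_ge (i:ℕ) a with hi | hi
    · rw [if_pos hi, if_pos hi, if_neg (Nat.not_le.mpr hi), add_zero]
    · rw [if_neg (Nat.not_lt.mpr hi), if_neg (Nat.not_lt.mpr hi), if_pos hi, zero_add]
  rw [Finset.sum_congr rfl fun i _ => key i, Finset.sum_add_distrib,
    sum_fin_ite_lt, sum_fin_ite_le]

/-- **Theorem 3.2 (b)(ii).** If `b > a ≥ 1`, `0 < l ≤ b`, `a + l > b` and
`f(x) = ((a x + l)/b)^d` has a fixed point in `[1,∞)`, then `h(T_{M(a,b;l)}) = log b`. -/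
theorem treeEntropy_Mabl_eq_of_fixed_point {d a b l : ℕ} (hd : 2 ≤ d)
    (ha : 1 ≤ a) (hab : a < b) (hl : 0 < l) (hlb : l ≤ b) (hsum : b < a + l)
    (hfix : ∃ x : ℝ, 1 ≤ x ∧ (((a : ℝ) * x + l) / b) ^ d = x)
    (M : Matrix (Fin (a + b)) (Fin (a + b)) ℕ) (hM : IsMabl a b l M) :
    treeEntropy d M = Real.log b := by
  obtain ⟨x, hx1, hxfix⟩ := hfix
  have hb0 : 0 < b := by omega
  have hbR : (0:ℝ) < b := by exact_mod_cast hb0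
  have hb1 : (1:ℝ) < b := by exact_mod_cast (by omega : 1 < b)
  have haR : (1:ℝ) ≤ a := by exact_mod_cast ha
  have hfixpow : ((a:ℝ) * x + l) ^ d = x * (b:ℝ) ^ d := by
    rw [div_pow] at hxfix; field_simp at hxfix; linarith
  have hq_cast : ∀ n, (b:ℝ) * (qseq b d n : ℝ) = (b:ℝ) ^ deltaCard d n := by
    intro n; exact_mod_cast congrArg (Nat.cast : ℕ → ℝ) (qseq_mul b d n)
  have hqpos : ∀ n, (0:ℝ) < (qseq b d n : ℝ) := by
    intro n
    have h1 : (0:ℝ) < (b:ℝ) ^ deltaCard d n := by positivity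
    nlinarith [hq_cast n]
  have hr_le : ∀ n, (rseq a b l d n : ℝ) ≤ x * qseq b d n := by
    intro n
    induction n with
    | zero => simpa [rseq, qseq] using hx1
    | succ n ih =>
        have hq := (hqpos n).le
        have h1 : (a:ℝ) * rseq a b l d n + l * qseq b d n ≤ ((a:ℝ)*x + l) * qseq b d n := by
          nlinarith [ih]
        have h0 : (0:ℝ) ≤ (a:ℝ) * (rseq a b l d n : ℝ) + (l:ℝ) * (qseq b d n : ℝ) := by
          positivity
        calc ((rseq a b l d (n+1) : ℕ) : ℝ)
            = ((a:ℝ) * rseq a b l d n + (l:ℝ) * qseq b d n) ^ d := by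
              rw [rseq]; push_cast; ring
          _ ≤ (((a:ℝ)*x + l) * qseq b d n) ^ d := pow_le_pow_left₀ h0 h1 d
          _ = ((a:ℝ)*x + l)^d * (qseq b d n : ℝ)^d := by rw [mul_pow]
          _ = x * ((b:ℝ) * qseq b d n)^d := by rw [hfixpow, mul_pow]; ring
          _ = x * (qseq b d (n+1) : ℝ) := by rw [qseq]; push_cast; ring
  set C : ℝ := (a:ℝ) * x + b with hC
  have hC1 : (1:ℝ) ≤ C := by nlinarith
  have hSlow : ∀ n, (b:ℝ) ^ deltaCard d n
      ≤ ((a * rseq a b l d n + b * qseq b d n : ℕ) : ℝ) := by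
    intro n
    have h0 : (0:ℝ) ≤ (a:ℝ) * (rseq a b l d n : ℝ) := by positivity
    push_cast
    linarith [hq_cast n]
  have hSup : ∀ n, ((a * rseq a b l d n + b * qseq b d n : ℕ) : ℝ)
      ≤ C * (b:ℝ) ^ deltaCard d n := by
    intro n
    have hrq := hr_le n
    have hq0 := (hqpos n).le
    have hCpos : (0:ℝ) ≤ C := by linarith
    have h1 : (a:ℝ) * (rseq a b l d n : ℝ) ≤ (a:ℝ) * (x * qseq b d n) :=
      mul_le_mul_of_nonneg_left hrq (by positivity)
    have h2 : (qseq b d n : ℝ) ≤ (b:ℝ) * qseq b d n := by nlinarith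
    have hCq : C * (qseq b d n : ℝ) = (a:ℝ) * (x * qseq b d n) + (b:ℝ) * qseq b d n := by
      rw [hC]; ring
    rw [← hq_cast n]
    push_cast
    linarith [mul_le_mul_of_nonneg_left h2 hCpos]
  have hSpos : ∀ n, (0:ℝ) < ((a * rseq a b l d n + b * qseq b d n : ℕ) : ℝ) := by
    intro n
    have : (0:ℝ) < (b:ℝ) ^ deltaCard d n := by positivity
    linarith [hSlow n]
  have hNpos : ∀ n, (0:ℝ) < (deltaCard d n : ℝ) := by
    intro n
    have := deltaCard_ge d n (by omega)
    exact_mod_cast (by omega : 0 < deltaCard d n)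
  have hlow : ∀ n, Real.log b
      ≤ Real.log ((a * rseq a b l d n + b * qseq b d n : ℕ) : ℝ) / (deltaCard d n : ℝ) := by
    intro n
    rw [le_div_iff₀ (hNpos n)]
    have h1 : Real.log ((b:ℝ) ^ deltaCard d n)
        ≤ Real.log ((a * rseq a b l d n + b * qseq b d n : ℕ) : ℝ) :=
      Real.log_le_log (by positivity) (hSlow n)
    rw [Real.log_pow] at h1
    linarith
  have hup : ∀ n, Real.log ((a * rseq a b l d n + b * qseq b d n : ℕ) : ℝ) / (deltaCard d n : ℝ)
      ≤ Real.log b + Real.log C / (deltaCard d n : ℝ) := by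
    intro n
    have h1 : Real.log ((a * rseq a b l d n + b * qseq b d n : ℕ) : ℝ)
        ≤ (deltaCard d n : ℝ) * Real.log b + Real.log C := by
      have h2 : Real.log ((a * rseq a b l d n + b * qseq b d n : ℕ) : ℝ)
          ≤ Real.log (C * (b:ℝ) ^ deltaCard d n) :=
        Real.log_le_log (hSpos n) (hSup n)
      rw [Real.log_mul (by linarith : C ≠ 0) (by positivity), Real.log_pow] at h2
      linarith
    rw [div_le_iff₀ (hNpos n)]
    have hlc : 0 ≤ Real.log C := Real.log_nonneg hC1
    have := (hNpos n)
    calc Real.log ((a * rseq a b l d n + b * qseq b d n : ℕ) : ℝ)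
        ≤ (deltaCard d n : ℝ) * Real.log b + Real.log C := h1
      _ = (Real.log b + Real.log C / (deltaCard d n : ℝ)) * (deltaCard d n : ℝ) := by
          field_simp
  have hNtop : Tendsto (fun n => (deltaCard d n : ℝ)) atTop atTop := by
    apply tendsto_atTop_mono (fun n => ?_) tendsto_natCast_atTop_atTop
    have := deltaCard_ge d n (by omega)
    exact_mod_cast (by omega : n ≤ deltaCard d n)
  have hup_t : Tendsto (fun n => Real.log b + Real.log C / (deltaCard d n : ℝ))
      atTop (nhds (Real.log b)) := by
    have h0 : Tendsto (fun n => Real.log C / (deltaCard d n : ℝ)) atTop (nhds 0) :=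
      Tendsto.div_atTop tendsto_const_nhds hNtop
    simpa using tendsto_const_nhds.add h0
  have htend : Tendsto (fun n =>
      Real.log ((a * rseq a b l d n + b * qseq b d n : ℕ) : ℝ) / (deltaCard d n : ℝ))
      atTop (nhds (Real.log b)) :=
    tendsto_of_tendsto_of_tendsto_of_le_of_le tendsto_const_nhds hup_t hlow hup
  unfold treeEntropy
  have heq : (fun n => Real.log (∑ i, (treeP d M n i : ℝ)) / (deltaCard d n : ℝ))
      = fun n => Real.log ((a * rseq a b l d n + b * qseq b d n : ℕ) : ℝ) / (deltaCard d n : ℝ) := by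
    funext n; rw [← Nat.cast_sum, sum_treeP hM n]
  rw [heq]
  exact htend.limsup_eq
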